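/- Let k be a nonnegative integer and let a be a complex number. Then lim_{ε → 0} Σ_{j=0}^{k} [(-k)_j · (a)_j] / [(-k+ε)_j · j!] = (-k-a)_k / (-k)_k, the limit being taken over complex ε ≠ 0 for which all denominators are nonzero. -/

import Mathlib

open Filter Topology

/-- The Pochhammer symbol (rising factorial) `(a)_l = a(a+1)⋯(a+l-1)`. -/
noncomputable def poch (a : ℂ) (l : ℕ) : ℂ := ∏ i ∈ Finset.range l, (a + i)

lemma poch_succ (a : ℂ) (l : ℕ) : poch a (l + 1) = poch a l * (a + l) := by
  unfold poch; rw [Finset.prod_range_succ]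

lemma poch_succ' (a : ℂ) (l : ℕ) : poch a (l + 1) = a * poch (a + 1) l := by
  unfold poch
  rw [Finset.prod_range_succ']
  simp only [Nat.cast_zero, add_zero]
  rw [mul_comm]
  congr 1
  exact Finset.prod_congr rfl (fun i _ => by push_cast; ring)

lemma poch_one (k : ℕ) : poch 1 k = (Nat.factorial k : ℂ) := by
  induction k with
  | zero => simp [poch]
  | succ k ih =>
      rw [poch_succ, ih, Nat.factorial_succ]
      push_cast; ring

lemma poch_neg_sub (k : ℕ) (a : ℂ) :
    poch (-(k : ℂ) - a) k = (-1) ^ k * poch (a + 1) k := by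
  induction k with
  | zero => simp [poch]
  | succ k ih =>
      rw [poch_succ' (-(↑(k+1) : ℂ) - a) k]
      have h1 : -(↑(k+1) : ℂ) - a + 1 = -(k : ℂ) - a := by push_cast; ring
      rw [h1, ih, poch_succ (a + 1) k]
      push_cast; ring

lemma poch_neg_k (k : ℕ) : poch (-(k : ℂ)) k = (-1) ^ k * (Nat.factorial k : ℂ) := by
  have := poch_neg_sub k 0
  simpa [poch_one] using this

lemma poch_ne_zero_of_le (k j : ℕ) (h : j ≤ k) : poch (-(k : ℂ)) j ≠ 0 := by
  unfold poch
  rw [Finset.prod_ne_zero_iff]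
  intro i hi h0
  rw [Finset.mem_range] at hi
  have hik : i < k := lt_of_lt_of_le hi h
  have : (i : ℂ) = (k : ℂ) := by linear_combination h0
  exact absurd (Nat.cast_injective this) hik.ne

lemma sum_poch (a : ℂ) (k : ℕ) :
    ∑ j ∈ Finset.range (k + 1), poch a j / (Nat.factorial j : ℂ)
      = poch (a + 1) k / (Nat.factorial k : ℂ) := by
  induction k with
  | zero => simp [poch]
  | succ k ih =>
      rw [Finset.sum_range_succ, ih, poch_succ' a k, poch_succ (a + 1) k,
        Nat.factorial_succ]
      have hk : (Nat.factorial k : ℂ) ≠ 0 := Nat.cast_ne_zero.mpr (Nat.factorial_ne_zero k)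
      have hk1 : ((k : ℂ) + 1) ≠ 0 := by
        have : ((k + 1 : ℕ) : ℂ) ≠ 0 := Nat.cast_ne_zero.mpr (Nat.succ_ne_zero k)
        push_cast at this; exact this
      field_simp
      push_cast; ring

/-- `lim_{ε→0} ₂F₁(-k, a; -k+ε; 1) = (-k-a)_k / (-k)_k`, the limit being taken over complex
`ε ≠ 0` for which all denominators are nonzero. -/
theorem limit_2F1_degenerate (k : ℕ) (a : ℂ) :
    Tendsto
      (fun ε : ℂ => ∑ j ∈ Finset.range (k + 1),
        poch (-(k : ℂ)) j * poch a j / (poch (-(k : ℂ) + ε) j * (Nat.factorial j : ℂ)))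
      (𝓝[{ε : ℂ | ε ≠ 0 ∧ ∀ j ≤ k, poch (-(k : ℂ) + ε) j ≠ 0}] 0)
      (𝓝 (poch (-(k : ℂ) - a) k / poch (-(k : ℂ)) k)) := by
  have hrhs : poch (-(k : ℂ) - a) k / poch (-(k : ℂ)) k
      = ∑ j ∈ Finset.range (k + 1), poch (-(k : ℂ)) j * poch a j /
          (poch (-(k : ℂ)) j * (Nat.factorial j : ℂ)) := by
    have : ∑ j ∈ Finset.range (k + 1), poch (-(k : ℂ)) j * poch a j /
          (poch (-(k : ℂ)) j * (Nat.factorial j : ℂ))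
        = ∑ j ∈ Finset.range (k + 1), poch a j / (Nat.factorial j : ℂ) := by
      refine Finset.sum_congr rfl (fun j hj => ?_)
      rw [Finset.mem_range, Nat.lt_succ_iff] at hj
      have h := poch_ne_zero_of_le k j hj
      rw [mul_div_mul_left _ _ h]
    rw [this, sum_poch, poch_neg_sub, poch_neg_k]
    have hk : (Nat.factorial k : ℂ) ≠ 0 := Nat.cast_ne_zero.mpr (Nat.factorial_ne_zero k)
    have hneg : ((-1 : ℂ)) ^ k ≠ 0 := by
      simp
    field_simp
  rw [hrhs]
  refine Tendsto.mono_left ?_ nhdsWithin_le_nhds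
  apply tendsto_finset_sum
  intro j hj
  rw [Finset.mem_range, Nat.lt_succ_iff] at hj
  have hcont : Continuous (fun ε : ℂ => poch (-(k : ℂ) + ε) j) := by
    unfold poch
    exact continuous_finset_prod _ (fun i _ => by continuity)
  have hden : Tendsto (fun ε : ℂ => poch (-(k : ℂ) + ε) j * (Nat.factorial j : ℂ))
      (𝓝 0) (𝓝 (poch (-(k : ℂ)) j * (Nat.factorial j : ℂ))) := by
    refine (hcont.mul continuous_const).tendsto' 0 _ ?_
    simp only [Pi.mul_apply, add_zero]
  have hdne : poch (-(k : ℂ)) j * (Nat.factorial j : ℂ) ≠ 0 :=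
    mul_ne_zero (poch_ne_zero_of_le k j hj)
      (Nat.cast_ne_zero.mpr (Nat.factorial_ne_zero j))
  exact Tendsto.div tendsto_const_nhds hden hdne
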